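/- Let φ < 0 and 0 < L < M be real numbers. Then the function z ↦ (M − z)⁺ / z^φ on [L, ∞) attains its maximum exactly at the point z₂* = max(φM/(φ − 1), L); that is, z₂* is the unique maximizer of (M − z)⁺ z^{−φ} over [L, ∞). -/

import Mathlib

open Real

private lemma gderiv (φ M : ℝ) {z : ℝ} (hz : 0 < z) :
    HasDerivAt (fun z : ℝ => (M - z) * z ^ (-φ))
      (z ^ (-φ - 1) * ((φ - 1) * z - φ * M)) z := by
  have h1 : HasDerivAt (fun z : ℝ => M - z) (-1) z := (hasDerivAt_id z).const_sub M
  have h2 : HasDerivAt (fun z : ℝ => z ^ (-φ)) ((-φ) * z ^ (-φ - 1)) z :=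
    Real.hasDerivAt_rpow_const (Or.inl hz.ne')
  have h : HasDerivAt (fun z : ℝ => (M - z) * z ^ (-φ)) _ z := h1.mul h2
  convert h using 1
  have hzz : z ^ (-φ) = z ^ (-φ - 1) * z := by
    have h3 := Real.rpow_add hz (-φ - 1) 1
    rw [Real.rpow_one] at h3
    rw [← h3]
    ring_nf
  rw [hzz]
  ring

/-- For `φ < 0` and `0 < L < M`, the function
`z ↦ (M − z)⁺ / z^φ` on `[L, ∞)` attains its maximum exactly at
`z₂* = max(φM/(φ − 1), L)`, which is the unique maximizer. -/
theorem compound_upper_boundary (φ L M : ℝ) (hφ : φ < 0) (hL : 0 < L) (hLM : L < M)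
    (z₂ : ℝ) (hz₂ : z₂ = max (φ * M / (φ - 1)) L) :
    z₂ ∈ Set.Ici L ∧
    ∀ z ∈ Set.Ici L, z ≠ z₂ →
      max (M - z) 0 / z ^ φ < max (M - z₂) 0 / z₂ ^ φ := by
  have hM : 0 < M := hL.trans hLM
  have hφ1 : φ - 1 < 0 := by linarith
  set zs := φ * M / (φ - 1) with hzs_def
  have hzs0 : 0 < zs := div_pos_of_neg_of_neg (mul_neg_of_neg_of_pos hφ hM) hφ1
  have hzsM : zs < M := by
    rw [hzs_def, div_lt_iff_of_neg hφ1]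
    nlinarith
  have hzs_mul : zs * (φ - 1) = φ * M := div_mul_cancel₀ _ hφ1.ne
  have hLz₂ : L ≤ z₂ := hz₂ ▸ le_max_right _ _
  have hz₂0 : 0 < z₂ := hL.trans_le hLz₂
  have hz₂M : z₂ < M := hz₂ ▸ max_lt hzsM hLM
  have hz₂zs : zs ≤ z₂ := hz₂ ▸ le_max_left _ _
  set g : ℝ → ℝ := fun z => (M - z) * z ^ (-φ) with hg_def
  -- rewriting the objective in terms of g for points below M
  have hval : ∀ w : ℝ, 0 < w → w < M → max (M - w) 0 / w ^ φ = g w := by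
    intro w hw hwM
    rw [max_eq_left (by linarith : (0:ℝ) ≤ M - w)]
    show (M - w) / w ^ φ = (M - w) * w ^ (-φ)
    rw [Real.rpow_neg hw.le, div_eq_mul_inv]
  have hg_cont : ∀ x : ℝ, 0 < x → ContinuousAt g x := by
    intro x hx
    exact (continuousAt_const.sub continuousAt_id).mul
      (Real.continuousAt_rpow_const x (-φ) (Or.inl hx.ne'))
  -- strict monotonicity on [L, z₂]
  have hmono : StrictMonoOn g (Set.Icc L z₂) := by
    apply strictMonoOn_of_deriv_pos (convex_Icc L z₂)
    · intro x hx
      exact (hg_cont x (hL.trans_le hx.1)).continuousWithinAt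
    · intro x hx
      rw [interior_Icc] at hx
      have hx0 : 0 < x := hL.trans hx.1
      rw [(gderiv φ M hx0).deriv]
      have hxzs : x < zs := by
        by_contra hcon
        push_neg at hcon
        have : z₂ ≤ x := hz₂ ▸ max_le hcon hx.1.le
        exact absurd hx.2 (not_lt.mpr this)
      have hbr : 0 < (φ - 1) * x - φ * M := by nlinarith [hzs_mul]
      exact mul_pos (Real.rpow_pos_of_pos hx0 _) hbr
  -- strict antitonicity on [z₂, M]
  have hanti : StrictAntiOn g (Set.Icc z₂ M) := by
    apply strictAntiOn_of_deriv_neg (convex_Icc z₂ M)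
    · intro x hx
      exact (hg_cont x (hz₂0.trans_le hx.1)).continuousWithinAt
    · intro x hx
      rw [interior_Icc] at hx
      have hx0 : 0 < x := hz₂0.trans hx.1
      rw [(gderiv φ M hx0).deriv]
      have hxzs : zs < x := hz₂zs.trans_lt hx.1
      have hbr : (φ - 1) * x - φ * M < 0 := by nlinarith [hzs_mul]
      exact mul_neg_of_pos_of_neg (Real.rpow_pos_of_pos hx0 _) hbr
  refine ⟨hLz₂, ?_⟩
  intro z hz hne
  have hgz₂pos : 0 < g z₂ :=
    mul_pos (by linarith) (Real.rpow_pos_of_pos hz₂0 _)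
  have hz0 : 0 < z := hL.trans_le hz
  rw [hval z₂ hz₂0 hz₂M]
  rcases lt_or_ge z M with hzM | hzM
  · rw [hval z hz0 hzM]
    rcases lt_or_gt_of_ne hne with hlt | hgt
    · exact hmono ⟨hz, hlt.le⟩ ⟨hLz₂, le_refl _⟩ hlt
    · exact hanti ⟨le_refl _, hz₂M.le⟩ ⟨hgt.le, hzM.le⟩ hgt
  · rw [max_eq_right (by linarith : M - z ≤ 0), zero_div]
    exact hgz₂pos
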